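/- Let n ≥ 2 be an integer with v = ⌊√n⌋, and let (a,b) be a free side of dF_v. Suppose that the set S(a,b;n) ∩ ((v−b, v] × ℤ₊ ∪ ℤ₊ × (v−a, v]) is primitive, i.e. every integer solution (x,y) of ax + by = n with either v − b < x ≤ v and y > 0, or x > 0 and v − a < y ≤ v, satisfies gcd(x,y) = 1. Then (a,b) belongs to an n-Farey triple all three of whose pairs are free sides of dF_v. -/
import Mathlib


/-- An `n`-Farey triple: three pairwise distinct pairs `(aᵢ, bᵢ)` of coprime positive
integers with `a_{i+1} (aᵢ + bᵢ) + b_{i+1} bᵢ = n` for each `i` (indices mod 3). -/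
def IsFareyTriple (n : ℕ) (P : Fin 3 → ℕ × ℕ) : Prop :=
  (∀ i, 0 < (P i).1 ∧ 0 < (P i).2 ∧ Nat.Coprime (P i).1 (P i).2) ∧
  Function.Injective P ∧
  ∀ i : Fin 3, (P (i + 1)).1 * ((P i).1 + (P i).2) + (P (i + 1)).2 * (P i).2 = n

/-- `(a, b)` is a side of `dF_v`: `a, b` are coprime positive integers with `a, b ≤ v` and
`a + b > v` (i.e. `a, b` are the denominators of two consecutive fractions in the Farey
sequence of order `v`). -/
def IsSide (v a b : ℕ) : Prop :=
  0 < a ∧ 0 < b ∧ Nat.Coprime a b ∧ a ≤ v ∧ b ≤ v ∧ v < a + b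

/-- `(a, b)` is a free side of `dF_{⌊√n⌋}` with respect to `Γ₀(n)`: it is a side, `n` does not
divide `a² + ab + b²`, and `n` does not divide `ax + by` for any side `(x, y)`. -/
def IsFreeSide (n a b : ℕ) : Prop :=
  IsSide (Nat.sqrt n) a b ∧ ¬ n ∣ a ^ 2 + a * b + b ^ 2 ∧
    ∀ x y : ℕ, IsSide (Nat.sqrt n) x y → ¬ n ∣ a * x + b * y

private lemma dvd_of_dvd_mul_coprime' {N X Y M : ℤ} (h : IsCoprime X Y)
    (h1 : N ∣ X * M) (h2 : N ∣ Y * M) : N ∣ M := by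
  obtain ⟨u, w, huw⟩ := h
  have hM : M = u * (X * M) + w * (Y * M) := by linear_combination (-M) * huw
  rw [hM]; exact dvd_add (h1.mul_left u) (h2.mul_left w)

private lemma isSide_int {v : ℕ} {X Y : ℤ} (h1 : 0 < X) (h2 : 0 < Y) (h3 : X ≤ (v:ℤ))
    (h4 : Y ≤ (v:ℤ)) (h5 : (v:ℤ) < X + Y) (hg : Int.gcd X Y = 1) :
    IsSide v X.toNat Y.toNat := by
  refine ⟨by omega, by omega, ?_, by omega, by omega, by omega⟩
  have e : Nat.gcd X.toNat Y.toNat = Int.gcd X Y := by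
    rw [← Int.gcd_natCast_natCast, Int.toNat_of_nonneg h1.le, Int.toNat_of_nonneg h2.le]
  simp only [Nat.Coprime, e, hg]

private lemma qd {A B N X Y : ℤ} (h : A * X + B * Y = N) (hco : IsCoprime X Y)
    (hQ : N ∣ X ^ 2 - X * Y + Y ^ 2) : N ∣ A ^ 2 + A * B + B ^ 2 := by
  have h1 : N ∣ Y ^ 2 * (A ^ 2 + A * B + B ^ 2) := by
    have e : Y ^ 2 * (A ^ 2 + A * B + B ^ 2)
        = A ^ 2 * (X ^ 2 - X * Y + Y ^ 2) - (A * X + B * Y) * (A * X - A * Y - B * Y) := by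
      ring
    rw [e, h]
    exact dvd_sub (hQ.mul_left _) (Dvd.intro _ rfl)
  have h2 : N ∣ X ^ 2 * (A ^ 2 + A * B + B ^ 2) := by
    have e : X ^ 2 * (A ^ 2 + A * B + B ^ 2)
        = B ^ 2 * (X ^ 2 - X * Y + Y ^ 2) + (A * X + B * Y) * (A * X + B * X - B * Y) := by
      ring
    rw [e, h]
    exact dvd_add (hQ.mul_left _) (Dvd.intro _ rfl)
  exact dvd_of_dvd_mul_coprime' (hco.pow) h2 h1

/-- there is a solution with `1 ≤ X ≤ B` and `Y ≥ 1`. -/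
private lemma exists_sol_small {A B N : ℤ} (hA : 0 < A) (hB : 0 < B)
    (hco : IsCoprime A B) (hABN : A * B < N) :
    ∃ X Y : ℤ, A * X + B * Y = N ∧ 1 ≤ X ∧ X ≤ B ∧ 1 ≤ Y := by
  obtain ⟨u, w, huw⟩ := hco
  refine ⟨u * N - B * ((u * N - 1) / B), w * N + A * ((u * N - 1) / B), by linear_combination N * huw, ?_, ?_, ?_⟩
  · have h1 : 0 ≤ (u * N - 1) % B := Int.emod_nonneg _ hB.ne'
    rw [Int.emod_def] at h1; linarith
  · have h1 : (u * N - 1) % B < B := Int.emod_lt_of_pos _ hB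
    rw [Int.emod_def] at h1; linarith
  · set X := u * N - B * ((u * N - 1) / B) with hX
    set Y := w * N + A * ((u * N - 1) / B) with hY
    have hXB : X ≤ B := by
      have h1 : (u * N - 1) % B < B := Int.emod_lt_of_pos _ hB
      rw [Int.emod_def] at h1; rw [hX]; linarith
    have hsol : A * X + B * Y = N := by rw [hX, hY]; linear_combination N * huw
    have hAX : A * X ≤ A * B := mul_le_mul_of_nonneg_left hXB hA.le
    have hBY : 0 < B * Y := by linarith
    by_contra hY1
    push_neg at hY1
    have : B * Y ≤ 0 := mul_nonpos_of_nonneg_of_nonpos hB.le (by linarith)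
    linarith

/-- the equality-chain degenerate case -/
private lemma eq_chain {A B V N X Y : ℤ} (hA : 0 < A) (hB : 0 < B) (hV : 0 ≤ V)
    (hsol : A * X + B * Y = N) (hXB : X ≤ B) (hYVA : Y ≤ V - A) (hBV : B ≤ V)
    (hV2 : V * V ≤ N) : X = B ∧ Y = V - A ∧ B = V := by
  have e1 : A * X ≤ A * B := mul_le_mul_of_nonneg_left hXB hA.le
  have e2 : B * Y ≤ B * (V - A) := mul_le_mul_of_nonneg_left hYVA hB.le
  have e3 : B * V ≤ V * V := mul_le_mul_of_nonneg_right hBV hV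
  have eAX : A * X = A * B := by nlinarith
  have eBY : B * Y = B * (V - A) := by nlinarith
  have eBV : B * V = V * V := by nlinarith
  refine ⟨mul_left_cancel₀ hA.ne' eAX, mul_left_cancel₀ hB.ne' eBY, ?_⟩
  have hV0 : 0 < V := lt_of_lt_of_le hB hBV
  exact mul_right_cancel₀ hV0.ne' eBV

/-- transfer of linear-form divisibility along a solution -/
private lemma linshift {A B N x y P Q : ℤ} (hsol : A * x + B * y = N) (hco : IsCoprime x y)
    (hL : N ∣ x * P + y * Q) : N ∣ A * Q - B * P := by
  have h1 : N ∣ y * (A * Q - B * P) := by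
    have e : y * (A * Q - B * P) = A * (x * P + y * Q) - (A * x + B * y) * P := by ring
    rw [e, hsol]
    exact dvd_sub (hL.mul_left _) (Dvd.intro _ rfl)
  have h2 : N ∣ x * (A * Q - B * P) := by
    have e : x * (A * Q - B * P) = -(B * (x * P + y * Q)) + (A * x + B * y) * Q := by ring
    rw [e, hsol]
    exact dvd_add ((hL.mul_left B).neg_right) (Dvd.intro _ rfl)
  exact dvd_of_dvd_mul_coprime' hco h2 h1

set_option maxHeartbeats 2000000 in
/-- **Lemma.** Let `n ≥ 2`, `v = ⌊√n⌋`, and let `(a, b)` be a free side of `dF_v`. If the set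
`S(a, b; n) ∩ ((v − b, v] × ℤ₊ ∪ ℤ₊ × (v − a, v])` is primitive, i.e. every integer solution
`(x, y)` of `ax + by = n` with `v − b < x ≤ v, y > 0` or with `x > 0, v − a < y ≤ v` satisfies
`gcd(x, y) = 1`, then `(a, b)` belongs to an `n`-Farey triple consisting of free sides of
`dF_v`. -/
theorem stmt13 (n : ℕ) (hn : 2 ≤ n) (a b : ℕ) (hab : IsFreeSide n a b)
    (hprim : ∀ x y : ℤ, (a : ℤ) * x + (b : ℤ) * y = n →
      (((Nat.sqrt n : ℤ) - b < x ∧ x ≤ (Nat.sqrt n : ℤ) ∧ 0 < y) ∨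
        (0 < x ∧ (Nat.sqrt n : ℤ) - a < y ∧ y ≤ (Nat.sqrt n : ℤ))) →
      Int.gcd x y = 1) :
    ∃ P : Fin 3 → ℕ × ℕ, IsFareyTriple n P ∧
      (∀ i : Fin 3, IsFreeSide n (P i).1 (P i).2) ∧ ∃ i : Fin 3, P i = (a, b) := by
  obtain ⟨⟨ha, hb, hcop, hav, hbv, hvab⟩, hD, hfree⟩ := hab
  set v := Nat.sqrt n with hvdef
  have hN2 : (2:ℤ) ≤ (n:ℤ) := by exact_mod_cast hn
  have hV2 : (v:ℤ) * v ≤ (n:ℤ) := by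
    have h := Nat.sqrt_le' n
    rw [← hvdef, pow_two] at h
    exact_mod_cast h
  have hNV : (n:ℤ) < ((v:ℤ) + 1) * ((v:ℤ) + 1) := by
    have h := Nat.lt_succ_sqrt' n
    rw [← hvdef] at h
    have h' : n < (v + 1) * (v + 1) := by rw [← pow_two]; exact h
    exact_mod_cast h'
  have hv1 : 1 ≤ v := by
    rw [hvdef]; exact Nat.sqrt_pos.mpr (by omega)
  have hV1 : (1:ℤ) ≤ (v:ℤ) := by exact_mod_cast hv1
  have hA : (0:ℤ) < (a:ℤ) := by exact_mod_cast ha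
  have hB : (0:ℤ) < (b:ℤ) := by exact_mod_cast hb
  have hAV : (a:ℤ) ≤ (v:ℤ) := by exact_mod_cast hav
  have hBV : (b:ℤ) ≤ (v:ℤ) := by exact_mod_cast hbv
  have hVAB : (v:ℤ) < (a:ℤ) + (b:ℤ) := by exact_mod_cast hvab
  have hABco : IsCoprime (a:ℤ) (b:ℤ) := Nat.isCoprime_iff_coprime.mpr hcop
  -- a*b < n
  have hABN : (a:ℤ) * b < (n:ℤ) := by
    have h1 : (a:ℤ) * b ≤ (v:ℤ) * v := mul_le_mul hAV hBV hB.le (by linarith)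
    rcases lt_or_eq_of_le h1 with h | h
    · linarith
    · -- a*b = v*v forces a = v and b = v
      have hEa : (a:ℤ) = v := by
        by_contra hne
        have : (a:ℤ) ≤ (v:ℤ) - 1 := by
          rcases lt_or_eq_of_le hAV with h' | h'
          · omega
          · exact absurd h' hne
        have : (a:ℤ) * b ≤ ((v:ℤ) - 1) * v := mul_le_mul this hBV hB.le (by linarith)
        nlinarith
      have hEb : (b:ℤ) = v := by
        by_contra hne
        have : (b:ℤ) ≤ (v:ℤ) - 1 := by
          rcases lt_or_eq_of_le hBV with h' | h'
          · omega
          · exact absurd h' hne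
        have : (a:ℤ) * b ≤ (v:ℤ) * ((v:ℤ) - 1) := mul_le_mul hAV this (by linarith) (by linarith)
        nlinarith
      have hae : a = v := by exact_mod_cast hEa
      have hbe : b = v := by exact_mod_cast hEb
      rw [hae, hbe] at hcop
      have hv' : v = 1 := by simpa [Nat.Coprime] using hcop
      have : (v:ℤ) = 1 := by exact_mod_cast hv'
      nlinarith
  -- the freeness contradiction for positive solutions inside the box
  have contra : ∀ X Y : ℤ, (a:ℤ) * X + b * Y = n → 0 < X → X ≤ v → 0 < Y → Y ≤ v →
      ((v:ℤ) - b < X ∨ (v:ℤ) - a < Y) → False := by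
    intro X Y hXY hX hXV hY hYV hclause
    have hg : Int.gcd X Y = 1 := by
      apply hprim X Y hXY
      rcases hclause with hc | hc
      · exact Or.inl ⟨hc, hXV, hY⟩
      · exact Or.inr ⟨hX, hc, hYV⟩
    have hsum : (v:ℤ) < X + Y := by
      by_contra hle
      push_neg at hle
      have hVX : (v:ℤ) * (X + Y) ≤ (v:ℤ) * v := mul_le_mul_of_nonneg_left hle (by linarith)
      have e1 : 0 ≤ ((v:ℤ) - a) * X := mul_nonneg (by linarith) hX.le
      have e2 : 0 ≤ ((v:ℤ) - b) * Y := mul_nonneg (by linarith) hY.le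
      have e3 : ((v:ℤ) - a) * X + ((v:ℤ) - b) * Y ≤ 0 := by nlinarith
      have eA : (a:ℤ) = v := by
        have h0 : ((v:ℤ) - a) * X = 0 := le_antisymm (by linarith) e1
        rcases mul_eq_zero.mp h0 with h | h
        · linarith
        · exact absurd h hX.ne'
      have eB : (b:ℤ) = v := by
        have h0 : ((v:ℤ) - b) * Y = 0 := le_antisymm (by linarith) e2
        rcases mul_eq_zero.mp h0 with h | h
        · linarith
        · exact absurd h hY.ne'
      have hae : a = v := by exact_mod_cast eA
      have hbe : b = v := by exact_mod_cast eB
      rw [hae, hbe] at hcop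
      have hv' : v = 1 := by simpa [Nat.Coprime] using hcop
      have hVone : (v:ℤ) = 1 := by exact_mod_cast hv'
      have hXY' : X + Y = (n:ℤ) := by linear_combination hXY - X * (eA.trans hVone) - Y * (eB.trans hVone)
      linarith
    have hside := isSide_int hX hY hXV hYV hsum hg
    apply hfree X.toNat Y.toNat hside
    have h1 : (↑(a * X.toNat + b * Y.toNat) : ℤ) = (n : ℤ) := by
      push_cast [Int.toNat_of_nonneg hX.le, Int.toNat_of_nonneg hY.le]
      exact hXY
    have h2 : a * X.toNat + b * Y.toNat = n := by exact_mod_cast h1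
    rw [h2]
  -- C1 : a positive solution with X ≤ v and Y > v
  have C1 : ∃ X Y : ℤ, (a:ℤ) * X + b * Y = n ∧ 0 < X ∧ X ≤ v ∧ (v:ℤ) < Y := by
    obtain ⟨X, Y, hsol, hX1, hXB, hY1⟩ := exists_sol_small hA hB hABco hABN
    by_cases hYV : (v:ℤ) < Y
    · exact ⟨X, Y, hsol, by linarith, by linarith, hYV⟩
    push_neg at hYV
    exfalso
    by_cases hc : (v:ℤ) - a < Y
    · exact contra X Y hsol (by linarith) (by linarith) (by linarith) hYV (Or.inr hc)
    push_neg at hc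
    obtain ⟨eX, eY, eB⟩ := eq_chain hA hB (by linarith : (0:ℤ) ≤ v) hsol hXB hc hBV hV2
    -- the side (b, v - a) contradicts freeness
    have hYpos : (0:ℤ) < (v:ℤ) - a := by rw [← eY]; linarith
    have hco2 : IsCoprime (b:ℤ) ((v:ℤ) - a) := by
      have h0 : IsCoprime (b:ℤ) (-(a:ℤ)) := hABco.symm.neg_right
      have h1 := h0.add_mul_left_right 1
      rw [mul_one] at h1
      have e : -(a:ℤ) + b = (v:ℤ) - a := by rw [← eB]; ring
      rwa [e] at h1
    have hg2 : Int.gcd (b:ℤ) ((v:ℤ) - a) = 1 := Int.isCoprime_iff_gcd_eq_one.mp hco2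
    have hside := isSide_int hB hYpos hBV (by linarith) (by linarith) hg2
    apply hfree (b:ℤ).toNat ((v:ℤ) - a).toNat hside
    have heq : (a:ℤ) * b + b * ((v:ℤ) - a) = n := by
      linear_combination hsol - (a:ℤ) * eX - (b:ℤ) * eY
    have h1 : (↑(a * ((b:ℤ)).toNat + b * ((v:ℤ) - a).toNat) : ℤ) = (n:ℤ) := by
      push_cast [Int.toNat_of_nonneg hB.le, Int.toNat_of_nonneg hYpos.le]
      linarith
    have h2 : a * ((b:ℤ)).toNat + b * ((v:ℤ) - a).toNat = n := by exact_mod_cast h1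
    rw [h2]
  -- C2 : a positive solution with Y ≤ v and X > v
  have C2 : ∃ X Y : ℤ, (a:ℤ) * X + b * Y = n ∧ 0 < Y ∧ Y ≤ v ∧ (v:ℤ) < X := by
    obtain ⟨Y, X, hsol', hY1, hYA, hX1⟩ :=
      exists_sol_small hB hA hABco.symm (by rw [mul_comm]; exact hABN)
    have hsol : (a:ℤ) * X + b * Y = n := by linarith
    by_cases hXV : (v:ℤ) < X
    · exact ⟨X, Y, hsol, by linarith, by linarith, hXV⟩
    push_neg at hXV
    exfalso
    by_cases hc : (v:ℤ) - b < X
    · exact contra X Y hsol (by linarith) hXV (by linarith) (by linarith) (Or.inl hc)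
    push_neg at hc
    obtain ⟨eY, eX, eA⟩ := eq_chain hB hA (by linarith : (0:ℤ) ≤ v) hsol' hYA hc hAV hV2
    have hXpos : (0:ℤ) < (v:ℤ) - b := by rw [← eX]; linarith
    have hco2 : IsCoprime ((v:ℤ) - b) (a:ℤ) := by
      have h0 : IsCoprime (-(b:ℤ)) (a:ℤ) := hABco.symm.neg_left
      have h1 := h0.add_mul_right_left 1
      rw [one_mul] at h1
      have e : -(b:ℤ) + a = (v:ℤ) - b := by rw [← eA]; ring
      rwa [e] at h1
    have hg2 : Int.gcd ((v:ℤ) - b) (a:ℤ) = 1 := Int.isCoprime_iff_gcd_eq_one.mp hco2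
    have hside := isSide_int hXpos hA (by linarith) hAV (by linarith) hg2
    apply hfree ((v:ℤ) - b).toNat ((a:ℤ)).toNat hside
    have heq : (a:ℤ) * ((v:ℤ) - b) + b * a = n := by
      linear_combination hsol - (a:ℤ) * eX - (b:ℤ) * eY
    have h1 : (↑(a * ((v:ℤ) - b).toNat + b * ((a:ℤ)).toNat) : ℤ) = (n:ℤ) := by
      push_cast [Int.toNat_of_nonneg hA.le, Int.toNat_of_nonneg hXpos.le]
      linarith
    have h2 : a * ((v:ℤ) - b).toNat + b * ((a:ℤ)).toNat = n := by exact_mod_cast h1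
    rw [h2]
  -- crossing construction
  obtain ⟨xp, yp, hsolp, hxp0, hxpV, hypV⟩ := C1
  obtain ⟨xq, yq, hsolq, hyq0, hyqV, hxqV⟩ := C2
  -- xq = xp + b*m, yq = yp - a*m
  obtain ⟨m, hmx, hmy⟩ : ∃ m : ℤ, xq = xp + b * m ∧ yq = yp - a * m := by
    have h1 : (a:ℤ) * (xq - xp) = b * (yp - yq) := by linarith
    have h3 : (b:ℤ) ∣ xq - xp := hABco.symm.dvd_of_dvd_mul_left ⟨yp - yq, h1⟩
    obtain ⟨m, hm⟩ := h3
    refine ⟨m, by linarith, ?_⟩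
    have h4 : (b:ℤ) * ((a:ℤ) * m) = b * (yp - yq) := by rw [← h1, hm]; ring
    have h5 := mul_left_cancel₀ hB.ne' h4
    linarith
  have hm1 : 1 ≤ m := by
    by_contra h
    push_neg at h
    have : (b:ℤ) * m ≤ 0 := mul_nonpos_of_nonneg_of_nonpos hB.le (by linarith)
    linarith
  have hPm : yp - ((m.toNat : ℤ)) * a ≤ (v:ℤ) := by
    have e : ((m.toNat : ℤ)) = m := Int.toNat_of_nonneg (by linarith)
    rw [e]; linarith
  have hPex : ∃ j : ℕ, yp - (j : ℤ) * a ≤ (v:ℤ) := ⟨m.toNat, hPm⟩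
  classical
  set j0 := Nat.find hPex with hj0def
  have hj0 : yp - (j0 : ℤ) * a ≤ (v:ℤ) := Nat.find_spec hPex
  have hj0pos : 1 ≤ j0 := by
    by_contra h
    push_neg at h
    interval_cases j0
    · simp only [Nat.cast_zero, zero_mul, sub_zero] at hj0
      linarith
  have hj0m : j0 ≤ m.toNat := Nat.find_le hPm
  have hjlt : (v:ℤ) < yp - ((j0:ℤ) - 1) * a := by
    have h := Nat.find_min hPex (show j0 - 1 < j0 by omega)
    have e : ((j0 - 1 : ℕ) : ℤ) = (j0:ℤ) - 1 := by omega
    rw [e] at h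
    exact lt_of_not_ge (fun hge => h (by linarith))
  obtain ⟨x, hxdef⟩ : ∃ x : ℤ, x = xp + ((j0:ℤ) - 1) * b := ⟨_, rfl⟩
  obtain ⟨y, hydef⟩ : ∃ y : ℤ, y = yp - ((j0:ℤ) - 1) * a := ⟨_, rfl⟩
  have hsolxy : (a:ℤ) * x + b * y = n := by rw [hxdef, hydef]; linear_combination hsolp
  have hsolxy' : (a:ℤ) * (x + b) + b * (y - a) = n := by linear_combination hsolxy
  have hx0 : 0 < x := by
    have hj1 : (1:ℤ) ≤ (j0:ℤ) := by exact_mod_cast hj0pos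
    have h0 : 0 ≤ ((j0:ℤ) - 1) * b := mul_nonneg (by linarith) hB.le
    rw [hxdef]; linarith
  have hyV : (v:ℤ) < y := by rw [hydef]; exact hjlt
  have hy'le : y - a ≤ (v:ℤ) := by
    have e : y - a = yp - (j0:ℤ) * a := by rw [hydef]; ring
    rw [e]; exact hj0
  have hy'pos : 0 < y - a := by
    have hjm : (j0:ℤ) ≤ m := by
      have : ((m.toNat : ℤ)) = m := Int.toNat_of_nonneg (by linarith)
      omega
    have h1 : (j0:ℤ) * a ≤ m * a := mul_le_mul_of_nonneg_right hjm hA.le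
    have e : y - a = yp - (j0:ℤ) * a := by rw [hydef]; ring
    rw [e]; linarith only [h1, hmy, hyq0, hA]
  -- no solution has both coordinates > v
  have noboth : ∀ X Y : ℤ, (a:ℤ) * X + b * Y = n → (v:ℤ) < X → (v:ℤ) < Y → False := by
    intro X Y hs h1 h2
    have e1 : (a:ℤ) * ((v:ℤ) + 1) ≤ a * X := mul_le_mul_of_nonneg_left (by linarith) hA.le
    have e2 : (b:ℤ) * ((v:ℤ) + 1) ≤ b * Y := mul_le_mul_of_nonneg_left (by linarith) hB.le
    have e3 : ((v:ℤ) + 1) * ((v:ℤ) + 1) ≤ ((a:ℤ) + b) * ((v:ℤ) + 1) :=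
      mul_le_mul_of_nonneg_right (by linarith) (by linarith)
    linarith only [e1, e2, e3, hs, hNV]
  have hxV : x ≤ (v:ℤ) := by
    by_contra h
    push_neg at h
    exact noboth x y hsolxy h hyV
  have hx'V : (v:ℤ) < x + b := by
    by_contra h
    push_neg at h
    exact contra (x + b) (y - a) hsolxy' (by linarith) h hy'pos hy'le
      (Or.inr (by linarith))
  -- classification: no solution fits in the box [≤v]×[≤v]
  have hclass : ∀ X Y : ℤ, (a:ℤ) * X + b * Y = n → X ≤ (v:ℤ) → Y ≤ (v:ℤ) → False := by
    intro X Y hs hXv hYv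
    have h1 : (a:ℤ) * (X - x) = b * (y - Y) := by linarith
    have h3 : (b:ℤ) ∣ X - x := hABco.symm.dvd_of_dvd_mul_left ⟨y - Y, h1⟩
    obtain ⟨t, ht⟩ := h3
    have hytY : y - Y = a * t := by
      have h4 : (b:ℤ) * ((a:ℤ) * t) = b * (y - Y) := by rw [← h1, ht]; ring
      have h5 := mul_left_cancel₀ hB.ne' h4
      linarith
    rcases le_or_gt t 0 with h | h
    · have : (a:ℤ) * t ≤ 0 := mul_nonpos_of_nonneg_of_nonpos hA.le h
      linarith
    · have h1t : (1:ℤ) ≤ t := h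
      have : (b:ℤ) * 1 ≤ b * t := mul_le_mul_of_nonneg_left h1t hB.le
      linarith
  -- bounds for the new sides
  have hb1V : y - x ≤ (v:ℤ) := by
    by_contra h
    push_neg at h
    have P1 : ((v:ℤ) + 1) * x ≤ ((a:ℤ) + b) * x := mul_le_mul_of_nonneg_right (by linarith) hx0.le
    have P2 : (b:ℤ) * ((v:ℤ) + 1) ≤ b * (y - x) := mul_le_mul_of_nonneg_left (by linarith) hB.le
    have P3 : ((v:ℤ) + 1) * ((v:ℤ) + 1) ≤ ((v:ℤ) + 1) * (x + b) :=
      mul_le_mul_of_nonneg_left (by linarith) (by linarith)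
    linarith only [P1, P2, P3, hsolxy, hNV]
  have ha2V : (x + b) - (y - a) ≤ (v:ℤ) := by
    by_contra h
    push_neg at h
    have Q1 : ((v:ℤ) + 1) * (y - a) ≤ ((a:ℤ) + b) * (y - a) :=
      mul_le_mul_of_nonneg_right (by linarith) hy'pos.le
    have Q2 : (a:ℤ) * ((v:ℤ) + 1) ≤ a * ((x + b) - (y - a)) :=
      mul_le_mul_of_nonneg_left (by linarith) hA.le
    have Q3 : ((v:ℤ) + 1) * ((v:ℤ) + 1) ≤ ((v:ℤ) + 1) * y :=
      mul_le_mul_of_nonneg_left (by linarith) (by linarith)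
    linarith only [Q1, Q2, Q3, hsolxy', hNV]
  -- primitivity
  have hgxy : Int.gcd x y = 1 :=
    hprim x y hsolxy (Or.inl ⟨by linarith, hxV, by linarith⟩)
  have hgx'y' : Int.gcd (x + b) (y - a) = 1 :=
    hprim (x + b) (y - a) hsolxy' (Or.inr ⟨by linarith, by linarith, hy'le⟩)
  have hco_xy : IsCoprime x y := Int.isCoprime_iff_gcd_eq_one.mpr hgxy
  have hco_x'y' : IsCoprime (x + b) (y - a) := Int.isCoprime_iff_gcd_eq_one.mpr hgx'y'
  -- natural number pairs
  obtain ⟨a1, ha1⟩ : ∃ k : ℕ, (k:ℤ) = x := ⟨x.toNat, Int.toNat_of_nonneg hx0.le⟩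
  obtain ⟨b1, hb1⟩ : ∃ k : ℕ, (k:ℤ) = y - x := ⟨(y - x).toNat, Int.toNat_of_nonneg (by linarith)⟩
  obtain ⟨a2, ha2⟩ : ∃ k : ℕ, (k:ℤ) = (x + b) - (y - a) :=
    ⟨((x + b) - (y - a)).toNat, Int.toNat_of_nonneg (by linarith)⟩
  obtain ⟨b2, hb2⟩ : ∃ k : ℕ, (k:ℤ) = y - a :=
    ⟨(y - a).toNat, Int.toNat_of_nonneg (by linarith)⟩
  -- coprimality of the new pairs
  have hco1 : IsCoprime x (y - x) := by
    have h := hco_xy.add_mul_left_right (-1)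
    rw [mul_neg_one, ← sub_eq_add_neg] at h
    exact h
  have hco2 : IsCoprime ((x + b) - (y - a)) (y - a) := by
    have h := hco_x'y'.add_mul_right_left (-1)
    rw [neg_one_mul, ← sub_eq_add_neg] at h
    exact h
  have hcop1 : Nat.Coprime a1 b1 := by
    have h : Int.gcd (a1:ℤ) (b1:ℤ) = 1 := by
      rw [ha1, hb1]; exact Int.isCoprime_iff_gcd_eq_one.mp hco1
    rwa [Int.gcd_natCast_natCast] at h
  have hcop2 : Nat.Coprime a2 b2 := by
    have h : Int.gcd (a2:ℤ) (b2:ℤ) = 1 := by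
      rw [ha2, hb2]; exact Int.isCoprime_iff_gcd_eq_one.mp hco2
    rwa [Int.gcd_natCast_natCast] at h
  -- nat facts
  have ha1p : 0 < a1 := by omega
  have hb1p : 0 < b1 := by omega
  have ha2p : 0 < a2 := by omega
  have hb2p : 0 < b2 := by omega
  have ha1v : a1 ≤ v := by omega
  have hb1v : b1 ≤ v := by omega
  have ha2v : a2 ≤ v := by omega
  have hb2v : b2 ≤ v := by omega
  have hs1v : v < a1 + b1 := by omega
  have hs2v : v < a2 + b2 := by omega
  have S1 : IsSide v a1 b1 := ⟨ha1p, hb1p, hcop1, ha1v, hb1v, hs1v⟩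
  have S2 : IsSide v a2 b2 := ⟨ha2p, hb2p, hcop2, ha2v, hb2v, hs2v⟩
  -- the three Farey relations
  have rel0 : a1 * (a + b) + b1 * b = n := by
    have h : ((a1 * (a + b) + b1 * b : ℕ) : ℤ) = (n:ℤ) := by
      push_cast [ha1, hb1]
      linear_combination hsolxy
    exact_mod_cast h
  have rel1 : a2 * (a1 + b1) + b2 * b1 = n := by
    have h : ((a2 * (a1 + b1) + b2 * b1 : ℕ) : ℤ) = (n:ℤ) := by
      push_cast [ha1, hb1, ha2, hb2]
      linear_combination hsolxy
    exact_mod_cast h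
  have rel2 : a * (a2 + b2) + b * b2 = n := by
    have h : ((a * (a2 + b2) + b * b2 : ℕ) : ℤ) = (n:ℤ) := by
      push_cast [ha2, hb2]
      linear_combination hsolxy
    exact_mod_cast h
  -- freeness of (a1, b1)
  have F1 : IsFreeSide n a1 b1 := by
    refine ⟨by rw [← hvdef]; exact S1, ?_, ?_⟩
    · intro hd
      have hd1 : (n:ℤ) ∣ ((a1:ℤ)^2 + (a1:ℤ) * b1 + (b1:ℤ)^2) := by exact_mod_cast hd
      rw [ha1, hb1] at hd1
      rw [show x^2 + x * (y - x) + (y - x)^2 = x^2 - x * y + y^2 from by ring] at hd1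
      have hDz := qd hsolxy hco_xy hd1
      have : n ∣ a^2 + a * b + b^2 := by exact_mod_cast hDz
      exact hD this
    · intro s t hst hd
      rw [← hvdef] at hst
      obtain ⟨hs0, ht0, hstco, hsv, htv, hvst⟩ := hst
      have hs1' : (1:ℤ) ≤ (s:ℤ) := by exact_mod_cast hs0
      have ht1' : (1:ℤ) ≤ (t:ℤ) := by exact_mod_cast ht0
      have hsv' : (s:ℤ) ≤ (v:ℤ) := by exact_mod_cast hsv
      have htv' : (t:ℤ) ≤ (v:ℤ) := by exact_mod_cast htv
      have hdz : (n:ℤ) ∣ (x * ((s:ℤ) - t) + y * t) := by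
        have h0 : (n:ℤ) ∣ ((a1:ℤ) * s + (b1:ℤ) * t) := by exact_mod_cast hd
        rw [ha1, hb1] at h0
        rwa [show x * (s:ℤ) + (y - x) * t = x * ((s:ℤ) - t) + y * t from by ring] at h0
      have hM : (n:ℤ) ∣ (a:ℤ) * t - b * ((s:ℤ) - t) := linshift hsolxy hco_xy hdz
      obtain ⟨c, hc⟩ := hM
      have u1 : (a:ℤ) * t ≤ (v:ℤ) * v := mul_le_mul hAV htv' (by linarith) (by linarith)
      have u2 : (b:ℤ) * ((t:ℤ) - s) ≤ b * ((v:ℤ) - 1) :=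
        mul_le_mul_of_nonneg_left (by linarith) hB.le
      have u3 : (b:ℤ) * ((v:ℤ) - 1) ≤ (v:ℤ) * ((v:ℤ) - 1) :=
        mul_le_mul_of_nonneg_right hBV (by linarith)
      have l2 : (b:ℤ) * (1 - (v:ℤ)) ≤ b * ((t:ℤ) - s) :=
        mul_le_mul_of_nonneg_left (by linarith) hB.le
      have l2' : (v:ℤ) * (1 - (v:ℤ)) ≤ (b:ℤ) * (1 - (v:ℤ)) :=
        mul_le_mul_of_nonpos_right hBV (by linarith)
      have l1 : (a:ℤ) * 1 ≤ a * t := mul_le_mul_of_nonneg_left ht1' hA.le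
      have hcr : c = 0 ∨ c = 1 := by
        have hub : (n:ℤ) * c < 2 * n := by
          have : (n:ℤ) * c = (a:ℤ) * t + b * ((t:ℤ) - s) := by linarith [hc]
          linarith [u1, u2, u3, hV2, hV1]
        have hlb : -(n:ℤ) < (n:ℤ) * c := by
          have : (n:ℤ) * c = (a:ℤ) * t + b * ((t:ℤ) - s) := by linarith [hc]
          linarith [l1, l2, l2', hV2, hV1, hA]
        have hc1 : c < 2 := by
          by_contra hcon
          push_neg at hcon
          have := mul_le_mul_of_nonneg_left hcon (show (0:ℤ) ≤ n by linarith)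
          linarith
        have hc2 : -1 < c := by
          by_contra hcon
          push_neg at hcon
          have := mul_le_mul_of_nonneg_left hcon (show (0:ℤ) ≤ n by linarith)
          linarith
        omega
      rcases hcr with h0 | h1
      · rw [h0, mul_zero] at hc
        have he : ((a:ℤ) + b) * t = b * s := by linarith [hc]
        have hdvd : ((a:ℤ) + b) ∣ (b:ℤ) * s := ⟨t, he.symm⟩
        have hcoab : IsCoprime ((a:ℤ) + b) (b:ℤ) := by
          have h := hABco.add_mul_right_left 1
          rwa [one_mul] at h
        have hdvds : ((a:ℤ) + b) ∣ (s:ℤ) := hcoab.dvd_of_dvd_mul_left hdvd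
        have := Int.le_of_dvd (by linarith) hdvds
        linarith
      · rw [h1, mul_one] at hc
        exact hclass t ((t:ℤ) - s) (by linarith [hc]) htv' (by linarith)
  -- freeness of (a2, b2)
  have F2 : IsFreeSide n a2 b2 := by
    refine ⟨by rw [← hvdef]; exact S2, ?_, ?_⟩
    · intro hd
      have hd1 : (n:ℤ) ∣ ((a2:ℤ)^2 + (a2:ℤ) * b2 + (b2:ℤ)^2) := by exact_mod_cast hd
      rw [ha2, hb2] at hd1
      rw [show ((x + b) - (y - a))^2 + ((x + b) - (y - a)) * (y - a) + (y - a)^2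
          = (x + b)^2 - (x + b) * (y - a) + (y - a)^2 from by ring] at hd1
      have hDz := qd hsolxy' hco_x'y' hd1
      have : n ∣ a^2 + a * b + b^2 := by exact_mod_cast hDz
      exact hD this
    · intro s t hst hd
      rw [← hvdef] at hst
      obtain ⟨hs0, ht0, hstco, hsv, htv, hvst⟩ := hst
      have hs1' : (1:ℤ) ≤ (s:ℤ) := by exact_mod_cast hs0
      have ht1' : (1:ℤ) ≤ (t:ℤ) := by exact_mod_cast ht0
      have hsv' : (s:ℤ) ≤ (v:ℤ) := by exact_mod_cast hsv
      have htv' : (t:ℤ) ≤ (v:ℤ) := by exact_mod_cast htv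
      have hdz : (n:ℤ) ∣ ((x + b) * (s:ℤ) + (y - a) * ((t:ℤ) - s)) := by
        have h0 : (n:ℤ) ∣ ((a2:ℤ) * s + (b2:ℤ) * t) := by exact_mod_cast hd
        rw [ha2, hb2] at h0
        rwa [show ((x + b) - (y - a)) * (s:ℤ) + (y - a) * t
            = (x + b) * (s:ℤ) + (y - a) * ((t:ℤ) - s) from by ring] at h0
      have hM : (n:ℤ) ∣ (a:ℤ) * ((t:ℤ) - s) - b * s := linshift hsolxy' hco_x'y' hdz
      obtain ⟨c, hc⟩ := hM
      have u1 : (a:ℤ) * ((t:ℤ) - s) ≤ a * ((v:ℤ) - 1) :=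
        mul_le_mul_of_nonneg_left (by linarith) hA.le
      have u2 : (a:ℤ) * ((v:ℤ) - 1) ≤ (v:ℤ) * ((v:ℤ) - 1) :=
        mul_le_mul_of_nonneg_right hAV (by linarith)
      have u3 : (b:ℤ) * 1 ≤ (b:ℤ) * s := mul_le_mul_of_nonneg_left hs1' hB.le
      have l1 : (a:ℤ) * (1 - (v:ℤ)) ≤ a * ((t:ℤ) - s) :=
        mul_le_mul_of_nonneg_left (by linarith) hA.le
      have l1' : (v:ℤ) * (1 - (v:ℤ)) ≤ (a:ℤ) * (1 - (v:ℤ)) :=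
        mul_le_mul_of_nonpos_right hAV (by linarith)
      have l3 : (b:ℤ) * s ≤ (v:ℤ) * v := mul_le_mul hBV hsv' (by linarith) (by linarith)
      have hcr : c = -1 ∨ c = 0 := by
        have hub : (n:ℤ) * c < (n:ℤ) := by
          have : (n:ℤ) * c = (a:ℤ) * ((t:ℤ) - s) - b * s := by linarith [hc]
          linarith [u1, u2, u3, hV2, hV1, hB]
        have hlb : -(2:ℤ) * n < (n:ℤ) * c := by
          have : (n:ℤ) * c = (a:ℤ) * ((t:ℤ) - s) - b * s := by linarith [hc]
          linarith [l1, l1', l3, hV2, hV1]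
        have hc1 : c < 1 := by
          by_contra hcon
          push_neg at hcon
          have := mul_le_mul_of_nonneg_left hcon (show (0:ℤ) ≤ n by linarith)
          linarith
        have hc2 : -2 < c := by
          by_contra hcon
          push_neg at hcon
          have := mul_le_mul_of_nonneg_left hcon (show (0:ℤ) ≤ n by linarith)
          linarith
        omega
      rcases hcr with h1 | h0
      · rw [h1] at hc
        have he : (a:ℤ) * ((s:ℤ) - t) + b * s = n := by linarith [hc]
        exact hclass ((s:ℤ) - t) s he (by linarith) hsv'
      · rw [h0, mul_zero] at hc
        have he : (a:ℤ) * t = ((a:ℤ) + b) * s := by linarith [hc]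
        have hdvd : ((a:ℤ) + b) ∣ (a:ℤ) * t := ⟨s, he⟩
        have hcoab : IsCoprime ((a:ℤ) + b) (a:ℤ) := by
          have h := hABco.symm.add_mul_right_left 1
          rw [one_mul] at h
          rwa [add_comm] at h
        have hdvds : ((a:ℤ) + b) ∣ (t:ℤ) := hcoab.dvd_of_dvd_mul_left hdvd
        have := Int.le_of_dvd (by linarith) hdvds
        linarith
  -- distinctness
  have hne01 : (a, b) ≠ (a1, b1) := by
    intro h
    rw [Prod.mk.injEq] at h
    apply hD
    have : a ^ 2 + a * b + b ^ 2 = a1 * (a + b) + b1 * b := by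
      rw [← h.1, ← h.2]; ring
    rw [this, rel0]
  have hne02 : (a, b) ≠ (a2, b2) := by
    intro h
    rw [Prod.mk.injEq] at h
    apply hD
    have : a ^ 2 + a * b + b ^ 2 = a * (a2 + b2) + b * b2 := by
      rw [← h.1, ← h.2]; ring
    rw [this, rel2]
  have hne12 : (a1, b1) ≠ (a2, b2) := by
    intro h
    rw [Prod.mk.injEq] at h
    apply F1.2.1
    have : a1 ^ 2 + a1 * b1 + b1 ^ 2 = a2 * (a1 + b1) + b2 * b1 := by
      rw [← h.1, ← h.2]; ring
    rw [this, rel1]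
  -- assemble
  refine ⟨![(a, b), (a1, b1), (a2, b2)], ⟨?_, ?_, ?_⟩, ?_, ⟨0, rfl⟩⟩
  · intro i
    fin_cases i
    · exact ⟨ha, hb, hcop⟩
    · exact ⟨ha1p, hb1p, hcop1⟩
    · exact ⟨ha2p, hb2p, hcop2⟩
  · intro i j hij
    fin_cases i <;> fin_cases j <;>
      simp only [Matrix.cons_val_zero, Matrix.cons_val_one, Matrix.head_cons,
        Matrix.cons_val_two, Matrix.tail_cons] at hij ⊢ <;>
      first
        | rfl
        | exact absurd hij hne01
        | exact absurd hij hne02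
        | exact absurd hij hne12
        | exact absurd hij.symm hne01
        | exact absurd hij.symm hne02
        | exact absurd hij.symm hne12
  · intro i
    fin_cases i
    · exact rel0
    · exact rel1
    · exact rel2
  · intro i
    fin_cases i
    · exact ⟨by rw [← hvdef]; exact ⟨ha, hb, hcop, hav, hbv, hvab⟩, hD, hfree⟩
    · exact F1
    · exact F2
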